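/- Let A be a skew-adjoint operator on a Hilbert space X, τ > 0, and v ∈ D(A²). Then ‖A(I - (τ/2)A)(I - (τ²/4)A²)^{-1} (I-A²)^{-1/4+θ} v‖² = ⟨(I-A²)^{-1/2+2θ} v, -A²(I - (τ²/4)A²)^{-1} v⟩ for any θ ∈ (0,1/4), and this quantity is bounded by ‖(I-A²)^{1/4+θ}(I - (τ²/4)A²)^{-1/2} v‖². -/

import Mathlib

set_option maxHeartbeats 1000000

lemma auxContRpow (c a : ℝ) (hc : 0 ≤ c) :
    ContinuousOn (fun s : ℝ => (1 - c * s) ^ a) (Set.Iic 0) := by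
  intro s hs
  have h1 : (0:ℝ) < 1 - c * s := by nlinarith [Set.mem_Iic.mp hs]
  exact (((continuous_const.sub (continuous_const.mul continuous_id)).continuousAt).rpow_const
    (Or.inl h1.ne')).continuousWithinAt

lemma auxContRpow' (a : ℝ) :
    ContinuousOn (fun s : ℝ => (1 - s) ^ a) (Set.Iic 0) := by
  intro s hs
  have h1 : (0:ℝ) < 1 - s := by nlinarith [Set.mem_Iic.mp hs]
  exact (((continuous_const.sub continuous_id).continuousAt).rpow_const
    (Or.inl h1.ne')).continuousWithinAt

lemma auxContInv (c : ℝ) (hc : 0 ≤ c) :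
    ContinuousOn (fun s : ℝ => (1 - c * s)⁻¹) (Set.Iic 0) := by
  intro s hs
  have h1 : (0:ℝ) < 1 - c * s := by nlinarith [Set.mem_Iic.mp hs]
  exact (((continuous_const.sub (continuous_const.mul continuous_id)).continuousAt).inv₀
    h1.ne').continuousWithinAt

lemma auxInvIci : ContinuousOn (fun s : ℝ => s⁻¹) (Set.Ici 1) := by
  intro x hx
  exact (continuousAt_inv₀ (by have := Set.mem_Ici.mp hx; positivity)).continuousWithinAt

lemma auxRpowIci (a : ℝ) : ContinuousOn (fun s : ℝ => s ^ a) (Set.Ici 1) := by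
  intro x hx
  have : (0:ℝ) < x := lt_of_lt_of_le one_pos (Set.mem_Ici.mp hx)
  exact (Real.continuousAt_rpow_const x a (Or.inl this.ne')).continuousWithinAt

theorem stmt_14 {X : Type*} [NormedAddCommGroup X] [InnerProductSpace ℂ X] [CompleteSpace X]
    (A : X →L[ℂ] X) (hA : ContinuousLinearMap.adjoint A = -A)
    (τ θ : ℝ) (hτ : 0 < τ) (hθ : θ ∈ Set.Ioo (0 : ℝ) (1/4)) (v : X) :
    ‖A ((1 - ((τ/2 : ℝ) : ℂ) • A)
        ((cfc (fun s : ℝ => s⁻¹) (1 - ((τ ^ 2 / 4 : ℝ) : ℂ) • (A * A)))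
          ((cfc (fun s : ℝ => s ^ (-(1/4) + θ : ℝ)) (1 - A * A)) v)))‖ ^ 2
      = ((inner ℂ ((cfc (fun s : ℝ => s ^ (-(1/2) + 2*θ : ℝ)) (1 - A * A)) v)
            (-(A (A ((cfc (fun s : ℝ => s⁻¹)
              (1 - ((τ ^ 2 / 4 : ℝ) : ℂ) • (A * A))) v)))) : ℂ)).re
    ∧ ‖A ((1 - ((τ/2 : ℝ) : ℂ) • A)
        ((cfc (fun s : ℝ => s⁻¹) (1 - ((τ ^ 2 / 4 : ℝ) : ℂ) • (A * A)))
          ((cfc (fun s : ℝ => s ^ (-(1/4) + θ : ℝ)) (1 - A * A)) v)))‖ ^ 2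
      ≤ ‖(cfc (fun s : ℝ => s ^ ((1/4) + θ : ℝ)) (1 - A * A))
          ((cfc (fun s : ℝ => s ^ (-(1/2) : ℝ))
            (1 - ((τ ^ 2 / 4 : ℝ) : ℂ) • (A * A))) v)‖ ^ 2 := by
  obtain ⟨hθ0, hθ4⟩ := hθ
  have hstar : star A = -A := by rw [ContinuousLinearMap.star_eq_adjoint, hA]
  have hT : IsSelfAdjoint (A * A) := by rw [IsSelfAdjoint, star_mul, hstar, neg_mul_neg]
  have hspec : ∀ s ∈ spectrum ℝ (A * A), s ≤ 0 := by
    have h0 : (0 : X →L[ℂ] X) ≤ -(A * A) := by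
      have := star_mul_self_nonneg A
      rwa [hstar, neg_mul] at this
    intro s hs
    have hmem : -s ∈ spectrum ℝ (-(A * A)) := by
      rw [← spectrum.neg_eq]; exact Set.neg_mem_neg.mpr hs
    linarith [spectrum_nonneg_of_nonneg h0 hmem]
  have hsub : spectrum ℝ (A * A) ⊆ Set.Iic 0 := fun s hs => hspec s hs
  set c : ℝ := τ ^ 2 / 4 with hc_def
  have hc : 0 ≤ c := by positivity
  -- base operators as cfc of A*A
  have hQ : (1 : X →L[ℂ] X) - ((c : ℝ) : ℂ) • (A * A) = cfc (fun s : ℝ => 1 - c * s) (A * A) := by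
    rw [cfc_sub (fun _ : ℝ => (1:ℝ)) (fun s : ℝ => c * s) (A*A) (by fun_prop) (by fun_prop),
      cfc_const_one ℝ (A*A), cfc_const_mul_id c (A*A), Complex.coe_smul]
  have hP : (1 : X →L[ℂ] X) - A * A = cfc (fun s : ℝ => 1 - s) (A * A) := by
    rw [cfc_sub (fun _ : ℝ => (1:ℝ)) (fun s : ℝ => s) (A*A) (by fun_prop) (by fun_prop),
      cfc_const_one ℝ (A*A), cfc_id' ℝ (A*A)]
  -- composition key
  have comp_key : ∀ (φ : ℝ → ℝ), Continuous φ → (∀ s ∈ spectrum ℝ (A*A), 1 ≤ φ s) →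
      ∀ g : ℝ → ℝ, ContinuousOn g (Set.Ici 1) →
      cfc g (cfc φ (A*A)) = cfc (fun s => g (φ s)) (A*A) := by
    intro φ hφ hφ1 g hg
    refine (cfc_comp' g φ (A*A) ?_ hφ.continuousOn hT).symm
    refine hg.mono ?_
    rintro x ⟨s, hs, rfl⟩
    exact hφ1 s hs
  have e1 : cfc (fun s : ℝ => s⁻¹) ((1 : X →L[ℂ] X) - ((c : ℝ) : ℂ) • (A * A))
      = cfc (fun s : ℝ => (1 - c * s)⁻¹) (A * A) := by
    rw [hQ, comp_key _ (by fun_prop) (fun s hs => by nlinarith [hspec s hs]) _ auxInvIci]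
  have e2 : cfc (fun s : ℝ => s ^ (-(1/4) + θ : ℝ)) ((1 : X →L[ℂ] X) - A * A)
      = cfc (fun s : ℝ => (1 - s) ^ (-(1/4) + θ : ℝ)) (A * A) := by
    rw [hP, comp_key _ (by fun_prop) (fun s hs => by nlinarith [hspec s hs]) _ (auxRpowIci _)]
  have e3 : cfc (fun s : ℝ => s ^ (-(1/2) + 2*θ : ℝ)) ((1 : X →L[ℂ] X) - A * A)
      = cfc (fun s : ℝ => (1 - s) ^ (-(1/2) + 2*θ : ℝ)) (A * A) := by
    rw [hP, comp_key _ (by fun_prop) (fun s hs => by nlinarith [hspec s hs]) _ (auxRpowIci _)]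
  have e4 : cfc (fun s : ℝ => s ^ ((1/4) + θ : ℝ)) ((1 : X →L[ℂ] X) - A * A)
      = cfc (fun s : ℝ => (1 - s) ^ ((1/4) + θ : ℝ)) (A * A) := by
    rw [hP, comp_key _ (by fun_prop) (fun s hs => by nlinarith [hspec s hs]) _ (auxRpowIci _)]
  have e5 : cfc (fun s : ℝ => s ^ (-(1/2) : ℝ)) ((1 : X →L[ℂ] X) - ((c : ℝ) : ℂ) • (A * A))
      = cfc (fun s : ℝ => (1 - c * s) ^ (-(1/2) : ℝ)) (A * A) := by
    rw [hQ, comp_key _ (by fun_prop) (fun s hs => by nlinarith [hspec s hs]) _ (auxRpowIci _)]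
  rw [e1, e2, e3, e4, e5]
  -- application / adjoint helpers
  have happ : ∀ (f g : ℝ → ℝ), ContinuousOn f (spectrum ℝ (A*A)) →
      ContinuousOn g (spectrum ℝ (A*A)) → ∀ x : X,
      cfc f (A*A) (cfc g (A*A) x) = cfc (fun s => f s * g s) (A*A) x := by
    intro f g hf hg x
    rw [cfc_mul f g (A*A) hf hg]
    rfl
  have hadj : ∀ f : ℝ → ℝ, ContinuousLinearMap.adjoint (cfc f (A*A)) = cfc f (A*A) := by
    intro f
    rw [← ContinuousLinearMap.star_eq_adjoint]
    exact (cfc_predicate f (A*A)).star_eq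
  have move : ∀ (f : ℝ → ℝ) (x y : X),
      (inner ℂ (cfc f (A*A) x) y : ℂ) = inner ℂ x (cfc f (A*A) y) := by
    intro f x y
    calc (inner ℂ (cfc f (A*A) x) y : ℂ)
        = inner ℂ ((ContinuousLinearMap.adjoint (cfc f (A*A))) x) y := by rw [hadj f]
      _ = inner ℂ x (cfc f (A*A) y) := ContinuousLinearMap.adjoint_inner_left _ y x
  -- continuity of the concrete functions
  have cF1 : ContinuousOn (fun s : ℝ => (1 - c * s)⁻¹) (spectrum ℝ (A*A)) :=
    (auxContInv c hc).mono hsub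
  have cF2 : ContinuousOn (fun s : ℝ => (1 - s) ^ (-(1/4) + θ : ℝ)) (spectrum ℝ (A*A)) :=
    (auxContRpow' _).mono hsub
  have cG0 : ContinuousOn (fun s : ℝ => (1 - s) ^ (-(1/2) + 2*θ : ℝ)) (spectrum ℝ (A*A)) :=
    (auxContRpow' _).mono hsub
  have cH1 : ContinuousOn (fun s : ℝ => (1 - s) ^ ((1/4) + θ : ℝ)) (spectrum ℝ (A*A)) :=
    (auxContRpow' _).mono hsub
  have cH2 : ContinuousOn (fun s : ℝ => (1 - c * s) ^ (-(1/2) : ℝ)) (spectrum ℝ (A*A)) :=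
    (auxContRpow c _ hc).mono hsub
  have cR : ContinuousOn (fun s : ℝ => (1 - s) ^ (θ - 1/4 : ℝ) * (1 - c * s) ^ (-(1/2) : ℝ))
      (spectrum ℝ (A*A)) := ((auxContRpow' _).mono hsub).mul cH2
  have cK : ContinuousOn (fun s : ℝ => (1 - c * s)⁻¹ * (1 - s) ^ (-(1/4) + θ : ℝ))
      (spectrum ℝ (A*A)) := cF1.mul cF2
  have cm : ContinuousOn (fun s : ℝ => c * s^2 - s) (spectrum ℝ (A*A)) := by fun_prop
  have hsq : ∀ u : X, ‖u‖^2 = (inner ℂ u u : ℂ).re := by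
    intro u
    rw [← inner_self_eq_norm_sq (𝕜 := ℂ) u]
    simp [RCLike.re_to_complex]
  -- norm reduction
  have norm_step : ∀ w : X, ‖A ((1 - ((τ/2 : ℝ) : ℂ) • A) w)‖^2
      = (inner ℂ w ((cfc (fun s : ℝ => c * s^2 - s) (A*A)) w) : ℂ).re := by
    intro w
    have hM : cfc (fun s : ℝ => c * s^2 - s) (A*A) = c • ((A*A)*(A*A)) - (A*A) := by
      rw [cfc_sub (fun s : ℝ => c * s^2) (fun s : ℝ => s) (A*A) (by fun_prop) (by fun_prop),
        cfc_const_mul c (fun s : ℝ => s^2) (A*A) (by fun_prop),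
        cfc_pow_id (A*A) 2, cfc_id' ℝ (A*A), sq]
    have e0 : A ((1 - ((τ/2 : ℝ) : ℂ) • A) w) = A w - ((τ/2 : ℝ) : ℂ) • (A*A) w := by
      simp only [ContinuousLinearMap.sub_apply, ContinuousLinearMap.one_apply,
        ContinuousLinearMap.smul_apply, map_sub, map_smul, ContinuousLinearMap.mul_apply]
    rw [e0, hM]
    have hz : (inner ℂ (A w) (A (A w)) : ℂ).re = 0 := by
      have h1 : (inner ℂ (A w) (A (A w)) : ℂ) = -(starRingEnd ℂ) (inner ℂ (A w) (A (A w))) := by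
        conv_lhs => rw [← ContinuousLinearMap.adjoint_inner_left A (A w) (A w)]
        rw [hA, ContinuousLinearMap.neg_apply, inner_neg_left, inner_conj_symm]
      have h2 := congrArg Complex.re h1
      simp only [Complex.neg_re, Complex.conj_re] at h2
      linarith
    have hcross : (inner ℂ (A w) (((τ/2 : ℝ) : ℂ) • (A*A) w) : ℂ).re = 0 := by
      rw [inner_smul_right]
      simp [Complex.mul_re, ContinuousLinearMap.mul_apply, hz]
    have hL1 : ‖A w‖^2 = -(inner ℂ w ((A*A) w) : ℂ).re := by
      rw [hsq]
      have : (inner ℂ (A w) (A w) : ℂ) = inner ℂ w (ContinuousLinearMap.adjoint A (A w)) := by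
        rw [ContinuousLinearMap.adjoint_inner_right]
      rw [this, hA]
      simp [ContinuousLinearMap.neg_apply, inner_neg_right, ContinuousLinearMap.mul_apply]
    have hL2 : ‖(((τ/2 : ℝ) : ℂ)) • (A*A) w‖^2 = c * (inner ℂ w ((A*A) ((A*A) w)) : ℂ).re := by
      rw [norm_smul, mul_pow, hsq]
      have h3 : (inner ℂ ((A*A) w) ((A*A) w) : ℂ)
          = inner ℂ w (ContinuousLinearMap.adjoint (A*A) ((A*A) w)) := by
        rw [ContinuousLinearMap.adjoint_inner_right]
      have h4 : ContinuousLinearMap.adjoint (A*A) = A*A := by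
        rw [← ContinuousLinearMap.star_eq_adjoint]; exact hT.star_eq
      rw [h3, h4]
      have h5 : ‖((τ/2 : ℝ) : ℂ)‖ = τ/2 := by
        rw [Complex.norm_real, Real.norm_eq_abs, abs_of_pos (by positivity)]
      rw [h5, hc_def]
      ring
    have hRHS : (inner ℂ w ((c • ((A*A)*(A*A)) - (A*A)) w) : ℂ).re
        = c * (inner ℂ w ((A*A) ((A*A) w)) : ℂ).re - (inner ℂ w ((A*A) w) : ℂ).re := by
      simp only [ContinuousLinearMap.sub_apply, ContinuousLinearMap.smul_apply,
        ContinuousLinearMap.mul_apply, inner_sub_right]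
      rw [← Complex.coe_smul, inner_smul_right]
      simp [Complex.sub_re, Complex.mul_re]
    rw [hRHS, norm_sub_sq (𝕜 := ℂ)]
    simp only [RCLike.re_to_complex]
    rw [hcross, hL1, hL2]
    ring
  have key1 : ∀ s : ℝ, s ≤ 0 →
      (1 - c * s)⁻¹ * (1 - s) ^ (-(1/4) + θ : ℝ) *
        ((c * s ^ 2 - s) * ((1 - c * s)⁻¹ * (1 - s) ^ (-(1/4) + θ : ℝ)))
      = -(s * ((1 - s) ^ (-(1/2) + 2*θ : ℝ) * (1 - c * s)⁻¹)) := by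
    intro s hs0
    have hx : (0:ℝ) < 1 - s := by linarith
    have hy : (0:ℝ) < 1 - c * s := by nlinarith
    have hy' : (1 - c * s : ℝ) ≠ 0 := hy.ne'
    have htu : (1 - s) ^ (-(1/4) + θ : ℝ) * (1 - s) ^ (-(1/4) + θ : ℝ)
        = (1 - s) ^ (-(1/2) + 2*θ : ℝ) := by
      rw [← Real.rpow_add hx]; congr 1; ring
    generalize h1 : ((1:ℝ) - s) ^ (-(1/4) + θ : ℝ) = t at htu ⊢
    generalize h2 : ((1:ℝ) - s) ^ (-(1/2) + 2*θ : ℝ) = u at htu ⊢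
    rw [← htu]
    field_simp
    ring
  have key2 : ∀ s : ℝ, s ≤ 0 →
      (1 - s) ^ ((1/4) + θ : ℝ) * (1 - c * s) ^ (-(1/2) : ℝ) *
        ((1 - s) ^ ((1/4) + θ : ℝ) * (1 - c * s) ^ (-(1/2) : ℝ))
      = -(s * ((1 - s) ^ (-(1/2) + 2*θ : ℝ) * (1 - c * s)⁻¹))
        + (1 - s) ^ (θ - 1/4 : ℝ) * (1 - c * s) ^ (-(1/2) : ℝ) *
            ((1 - s) ^ (θ - 1/4 : ℝ) * (1 - c * s) ^ (-(1/2) : ℝ)) := by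
    intro s hs0
    have hx : (0:ℝ) < 1 - s := by linarith
    have hy : (0:ℝ) < 1 - c * s := by nlinarith
    have r1 : (1 - s) ^ ((1/4) + θ : ℝ) * (1 - s) ^ ((1/4) + θ : ℝ)
        = (1 - s) * (1 - s) ^ (-(1/2) + 2*θ : ℝ) := by
      rw [← Real.rpow_add hx, show ((1/4) + θ + ((1/4) + θ) : ℝ) = 1 + (-(1/2) + 2*θ) by ring,
        Real.rpow_add hx, Real.rpow_one]
    have r2 : (1 - s) ^ (θ - 1/4 : ℝ) * (1 - s) ^ (θ - 1/4 : ℝ)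
        = (1 - s) ^ (-(1/2) + 2*θ : ℝ) := by
      rw [← Real.rpow_add hx]; congr 1; ring
    have r3 : (1 - c * s) ^ (-(1/2) : ℝ) * (1 - c * s) ^ (-(1/2) : ℝ)
        = (1 - c * s)⁻¹ := by
      rw [← Real.rpow_add hy, show (-(1/2) + -(1/2) : ℝ) = -1 by norm_num, Real.rpow_neg_one]
    generalize ha1 : ((1:ℝ) - s) ^ ((1/4) + θ : ℝ) = a1 at r1 ⊢
    generalize hu : ((1:ℝ) - s) ^ (-(1/2) + 2*θ : ℝ) = u at r1 r2 ⊢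
    generalize ha : ((1:ℝ) - s) ^ (θ - 1/4 : ℝ) = a at r2 ⊢
    generalize hb : ((1:ℝ) - c * s) ^ (-(1/2) : ℝ) = b at r3 ⊢
    rw [← r3]
    linear_combination (b * b) * r1 - (b * b) * r2
  -- abbreviations (literal)
  have cNeg : ContinuousOn (fun s : ℝ => -(s * (1 - c * s)⁻¹)) (spectrum ℝ (A*A)) :=
    (continuousOn_id.mul cF1).neg
  have hw : cfc (fun s : ℝ => (1 - c * s)⁻¹) (A*A)
        (cfc (fun s : ℝ => (1 - s) ^ (-(1/4) + θ : ℝ)) (A*A) v)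
      = cfc (fun s : ℝ => (1 - c * s)⁻¹ * (1 - s) ^ (-(1/4) + θ : ℝ)) (A*A) v :=
    happ _ _ cF1 cF2 v
  have hL : ‖A ((1 - ((τ/2 : ℝ) : ℂ) • A)
        (cfc (fun s : ℝ => (1 - c * s)⁻¹ * (1 - s) ^ (-(1/4) + θ : ℝ)) (A*A) v))‖^2
      = (inner ℂ v (cfc (fun s : ℝ =>
          -(s * ((1 - s) ^ (-(1/2) + 2*θ : ℝ) * (1 - c * s)⁻¹))) (A*A) v) : ℂ).re := by
    rw [norm_step, move]
    simp only [happ _ _ cm cK, happ _ (fun s : ℝ => (c * s ^ 2 - s) * ((1 - c * s)⁻¹ * (1 - s) ^ (-(1/4) + θ : ℝ))) cK (cm.mul cK)]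
    have hGG : cfc (fun s : ℝ => (1 - c * s)⁻¹ * (1 - s) ^ (-(1/4) + θ : ℝ) *
          ((c * s ^ 2 - s) * ((1 - c * s)⁻¹ * (1 - s) ^ (-(1/4) + θ : ℝ)))) (A*A)
        = cfc (fun s : ℝ =>
            -(s * ((1 - s) ^ (-(1/2) + 2*θ : ℝ) * (1 - c * s)⁻¹))) (A*A) := by
      exact cfc_congr fun s hs => key1 s (hspec s hs)
    rw [hGG]
  have hNA : (-(A (A (cfc (fun s : ℝ => (1 - c * s)⁻¹) (A*A) v))))
      = cfc (fun s : ℝ => -(s * (1 - c * s)⁻¹)) (A*A) v := by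
    have h1 : cfc (fun s : ℝ => -(s * (1 - c * s)⁻¹)) (A*A)
        = -((A*A) * cfc (fun s : ℝ => (1 - c * s)⁻¹) (A*A)) := by
      rw [cfc_neg (fun s : ℝ => s * (1 - c * s)⁻¹) (A*A),
        cfc_mul _ _ (A*A) (by fun_prop) cF1, cfc_id' ℝ (A*A)]
    rw [h1]
    simp [ContinuousLinearMap.neg_apply, ContinuousLinearMap.mul_apply]
  have hR : ((inner ℂ (cfc (fun s : ℝ => (1 - s) ^ (-(1/2) + 2*θ : ℝ)) (A*A) v)
        (-(A (A (cfc (fun s : ℝ => (1 - c * s)⁻¹) (A*A) v)))) : ℂ)).re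
      = (inner ℂ v (cfc (fun s : ℝ =>
          -(s * ((1 - s) ^ (-(1/2) + 2*θ : ℝ) * (1 - c * s)⁻¹))) (A*A) v) : ℂ).re := by
    rw [hNA, move]
    simp only [happ _ _ cG0 cNeg]
    have hGG2 : cfc (fun s : ℝ => (1 - s) ^ (-(1/2) + 2*θ : ℝ) * -(s * (1 - c * s)⁻¹)) (A*A)
        = cfc (fun s : ℝ =>
            -(s * ((1 - s) ^ (-(1/2) + 2*θ : ℝ) * (1 - c * s)⁻¹))) (A*A) := by
      apply cfc_congr
      intro s hs
      ring
    rw [hGG2]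
  have hRR : ‖cfc (fun s : ℝ => (1 - s) ^ (θ - 1/4 : ℝ) * (1 - c * s) ^ (-(1/2) : ℝ)) (A*A) v‖^2
      = (inner ℂ v (cfc (fun s : ℝ => ((1 - s) ^ (θ - 1/4 : ℝ) * (1 - c * s) ^ (-(1/2) : ℝ)) *
          ((1 - s) ^ (θ - 1/4 : ℝ) * (1 - c * s) ^ (-(1/2) : ℝ))) (A*A) v) : ℂ).re := by
    rw [hsq, move]
    simp only [happ _ _ cR cR]
  have hB : ‖cfc (fun s : ℝ => (1 - s) ^ ((1/4) + θ : ℝ)) (A*A)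
        (cfc (fun s : ℝ => (1 - c * s) ^ (-(1/2) : ℝ)) (A*A) v)‖^2
      = (inner ℂ v (cfc (fun s : ℝ =>
          -(s * ((1 - s) ^ (-(1/2) + 2*θ : ℝ) * (1 - c * s)⁻¹))) (A*A) v) : ℂ).re
        + ‖cfc (fun s : ℝ => (1 - s) ^ (θ - 1/4 : ℝ) * (1 - c * s) ^ (-(1/2) : ℝ)) (A*A) v‖^2 := by
    rw [happ _ _ cH1 cH2 v, hsq, move]
    simp only [happ (fun s : ℝ => (1 - s) ^ ((1/4) + θ : ℝ) * (1 - c * s) ^ (-(1/2) : ℝ)) (fun s : ℝ => (1 - s) ^ ((1/4) + θ : ℝ) * (1 - c * s) ^ (-(1/2) : ℝ)) (cH1.mul cH2) (cH1.mul cH2)]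
    have hsplit : cfc (fun s : ℝ => ((1 - s) ^ ((1/4) + θ : ℝ) * (1 - c * s) ^ (-(1/2) : ℝ)) *
          ((1 - s) ^ ((1/4) + θ : ℝ) * (1 - c * s) ^ (-(1/2) : ℝ))) (A*A)
        = cfc (fun s : ℝ =>
            -(s * ((1 - s) ^ (-(1/2) + 2*θ : ℝ) * (1 - c * s)⁻¹))) (A*A)
          + cfc (fun s : ℝ => ((1 - s) ^ (θ - 1/4 : ℝ) * (1 - c * s) ^ (-(1/2) : ℝ)) *
              ((1 - s) ^ (θ - 1/4 : ℝ) * (1 - c * s) ^ (-(1/2) : ℝ))) (A*A) := by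
      have hGc : ContinuousOn (fun s : ℝ =>
          -(s * ((1 - s) ^ (-(1/2) + 2*θ : ℝ) * (1 - c * s)⁻¹))) (spectrum ℝ (A*A)) :=
        (continuousOn_id.mul (cG0.mul cF1)).neg
      have hadd := cfc_add (a := A*A)
        (f := fun s : ℝ => -(s * ((1 - s) ^ (-(1/2) + 2*θ : ℝ) * (1 - c * s)⁻¹)))
        (g := fun s : ℝ => (1 - s) ^ (θ - 1/4 : ℝ) * (1 - c * s) ^ (-(1/2) : ℝ) *
            ((1 - s) ^ (θ - 1/4 : ℝ) * (1 - c * s) ^ (-(1/2) : ℝ)))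
        hGc (cR.mul cR)
      rw [← hadd]
      exact cfc_congr fun s hs => key2 s (hspec s hs)
    rw [hsplit, hRR]
    simp [ContinuousLinearMap.add_apply, inner_add_right, Complex.add_re]
  constructor
  · rw [hw, hL]
    exact hR.symm
  · rw [hw, hL, hB]
    exact le_add_of_nonneg_right (by positivity)
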